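/- Let d ≥ 2 and let γ, δ ≥ 0 be real numbers with (d+1)γ + (d−1)δ = 2. The operator C_γ = γ P₊ + δ P₋ on ℂ^d ⊗ ℂ^d is separable (i.e., a finite sum of tensor products A_i ⊗ B_i of positive semidefinite matrices A_i, B_i ∈ Matrix d d ℂ) if and only if γ ≥ 1/(d+1). -/

import Mathlib

open ComplexOrder ComplexConjugate

noncomputable section

/-- The swap (flip) operator `E` on `ℂ^d ⊗ ℂ^d`. -/
def swapOp (d : ℕ) : Matrix (Fin d × Fin d) (Fin d × Fin d) ℂ :=
  fun p q => if p.1 = q.2 ∧ p.2 = q.1 then 1 else 0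

/-- The projector `P₊ = (I + E)/2` onto the symmetric subspace of `ℂ^d ⊗ ℂ^d`. -/
def Pplus (d : ℕ) : Matrix (Fin d × Fin d) (Fin d × Fin d) ℂ :=
  ((1 : ℂ) / 2) • ((1 : Matrix (Fin d × Fin d) (Fin d × Fin d) ℂ) + swapOp d)

/-- The projector `P₋ = (I - E)/2` onto the antisymmetric subspace of `ℂ^d ⊗ ℂ^d`. -/
def Pminus (d : ℕ) : Matrix (Fin d × Fin d) (Fin d × Fin d) ℂ :=
  ((1 : ℂ) / 2) • ((1 : Matrix (Fin d × Fin d) (Fin d × Fin d) ℂ) - swapOp d)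

/-! ### Auxiliary machinery -/

/-- indicator of a proposition, as a complex number -/
def ind (P : Prop) [Decidable P] : ℂ := if P then 1 else 0

lemma conj_ind (P : Prop) [Decidable P] : conj (ind P) = ind P := by
  unfold ind; split <;> simp

lemma ind_mul_ind (P Q : Prop) [Decidable P] [Decidable Q] :
    ind P * ind Q = ind (P ∧ Q) := by
  unfold ind; split_ifs <;> simp_all

lemma ind_congr {P Q : Prop} [Decidable P] [Decidable Q] (h : P ↔ Q) : ind P = ind Q := by
  unfold ind; split_ifs <;> tauto

/-- rank-one "outer product" matrix `c • u uᴴ` -/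
def outer {d : ℕ} (c : ℝ) (u : Fin d → ℂ) : Matrix (Fin d) (Fin d) ℂ :=
  Matrix.of fun x y => (c : ℂ) * (u x * conj (u y))

lemma outer_apply {d : ℕ} (c : ℝ) (u : Fin d → ℂ) (x y : Fin d) :
    outer c u x y = (c : ℂ) * (u x * conj (u y)) := rfl

lemma outer_posSemidef {d : ℕ} {c : ℝ} (hc : 0 ≤ c) (u : Fin d → ℂ) :
    (outer c u).PosSemidef := by
  refine Matrix.posSemidef_iff_dotProduct_mulVec.2 ⟨?_, ?_⟩
  · ext x y
    simp only [Matrix.conjTranspose_apply, outer_apply, RCLike.star_def, map_mul,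
      Complex.conj_conj, Complex.conj_ofReal]
    ring
  · intro x
    have h : dotProduct (star x) ((outer c u).mulVec x)
        = (c : ℂ) * (conj (∑ y, conj (u y) * x y) * (∑ y, conj (u y) * x y)) := by
      simp only [dotProduct, Matrix.mulVec, outer_apply, Pi.star_apply, RCLike.star_def,
        map_sum, map_mul, Complex.conj_conj, Finset.mul_sum, Finset.sum_mul]
      rw [Finset.sum_comm]
      refine Finset.sum_congr rfl fun y _ => Finset.sum_congr rfl fun z _ => ?_
      ring
    rw [h]
    have h1 : (0:ℂ) ≤ (c : ℂ) := by exact Complex.zero_le_real.2 hc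
    exact mul_nonneg h1 (star_mul_self_nonneg _)

def uu {d : ℕ} (i j : Fin d) (W : ℂ) : Fin d → ℂ := fun x => ind (x = i) + W * ind (x = j)
def zz {d : ℕ} (i j : Fin d) (W : ℂ) : Fin d → ℂ := fun x => ind (x = i) - W * ind (x = j)

lemma sum_I_pow (f : ℂ → ℂ) :
    ∑ k : Fin 4, f (Complex.I ^ (k : ℕ)) = f 1 + f Complex.I + f (-1) + f (-Complex.I) := by
  have h2 : Complex.I ^ ((2 : Fin 4) : ℕ) = -1 := by norm_num [Complex.I_sq]
  have h3 : Complex.I ^ ((3 : Fin 4) : ℕ) = -Complex.I := by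
    show Complex.I ^ (3:ℕ) = _
    rw [pow_succ, Complex.I_sq]; ring
  rw [Fin.sum_univ_four, h2, h3]
  norm_num

lemma innerB_abstract (A0 A1 B0 B1 C0 C1 E0 E1 : ℂ) :
    ∑ ω : Fin 4, ((A0 + Complex.I ^ (ω : ℕ) * A1) * (C0 + conj (Complex.I ^ (ω : ℕ)) * C1))
        * ((B0 - Complex.I ^ (ω : ℕ) * B1) * (E0 - conj (Complex.I ^ (ω : ℕ)) * E1))
      = 4 * ((A0 * C0 + A1 * C1) * (B0 * E0 + B1 * E1)
          - A0 * C1 * (B1 * E0) - A1 * C0 * (B0 * E1)) := by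
  rw [sum_I_pow (fun w => ((A0 + w * A1) * (C0 + conj w * C1))
        * ((B0 - w * B1) * (E0 - conj w * E1)))]
  simp only [map_one, Complex.conj_I, map_neg, map_one]
  linear_combination ((-2)*A0*C0*B1*E1 + (-2)*A0*C1*B0*E1 + (2)*A0*C1*B1*E0 + (2)*A1*C0*B0*E1
    + (-2)*A1*C0*B1*E0 + (-2)*A1*C1*B0*E0 + (2)*Complex.I^2*A1*C1*B1*E1
    + (-2)*A1*C1*B1*E1) * Complex.I_sq

lemma ite_prod_eq (p q r : Prop) [Decidable p] [Decidable q] [Decidable r] :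
    (if p then (1:ℂ) else 0) * ((if q then (1:ℂ) else 0) * (if r then (1:ℂ) else 0))
      = if (p ∧ q ∧ r) then 1 else 0 := by
  split_ifs <;> simp_all

lemma sum_ind_two {d : ℕ} (x y : Fin d) :
    ∑ i, ind (x = i) * ind (y = i) = ind (x = y) := by
  have h : ∀ i, ind (x = i) * ind (y = i) = if x = i then (if y = i then (1:ℂ) else 0) else 0 := by
    intro i; unfold ind; split_ifs <;> ring
  rw [Finset.sum_congr rfl fun i _ => h i, Finset.sum_ite_eq]
  simp only [Finset.mem_univ, if_true]
  unfold ind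
  exact if_congr eq_comm rfl rfl

lemma sum_ind_four {d : ℕ} (x y z w : Fin d) :
    ∑ i, ind (x = i) * ind (y = i) * (ind (z = i) * ind (w = i))
      = ind (x = y ∧ x = z ∧ x = w) := by
  have h : ∀ i, ind (x = i) * ind (y = i) * (ind (z = i) * ind (w = i))
      = if x = i then ((if y = i then (1:ℂ) else 0) * ((if z = i then (1:ℂ) else 0)
          * (if w = i then (1:ℂ) else 0))) else 0 := by
    intro i; unfold ind; split_ifs <;> ring
  rw [Finset.sum_congr rfl fun i _ => h i, Finset.sum_ite_eq]
  simp only [Finset.mem_univ, if_true]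
  unfold ind
  have hiff : (x = y ∧ x = z ∧ x = w) ↔ (y = x ∧ z = x ∧ w = x) := by
    constructor <;> rintro ⟨r1, r2, r3⟩ <;> exact ⟨r1.symm, r2.symm, r3.symm⟩
  rw [if_congr hiff rfl rfl]
  exact ite_prod_eq _ _ _

lemma E1 {d : ℕ} (a b c e : Fin d) :
    ∑ i : Fin d, ∑ j : Fin d,
      ((ind (a = i) * ind (c = i) + ind (a = j) * ind (c = j))
          * (ind (b = i) * ind (e = i) + ind (b = j) * ind (e = j))
        - ind (a = i) * ind (c = j) * (ind (b = j) * ind (e = i))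
        - ind (a = j) * ind (c = i) * (ind (b = i) * ind (e = j)))
      = 2 * d * ind (a = c ∧ a = b ∧ a = e) + 2 * (ind (a = c) * ind (b = e))
        - 2 * (ind (a = e) * ind (c = b)) := by
  have hj : ∀ i : Fin d, ∑ j : Fin d,
      ((ind (a = i) * ind (c = i) + ind (a = j) * ind (c = j))
          * (ind (b = i) * ind (e = i) + ind (b = j) * ind (e = j))
        - ind (a = i) * ind (c = j) * (ind (b = j) * ind (e = i))
        - ind (a = j) * ind (c = i) * (ind (b = i) * ind (e = j)))
      = (d : ℂ) * (ind (a = i) * ind (c = i) * (ind (b = i) * ind (e = i)))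
        + (ind (a = i) * ind (c = i)) * ind (b = e)
        + ind (a = c) * (ind (b = i) * ind (e = i))
        + ind (a = c ∧ a = b ∧ a = e)
        - (ind (a = i) * ind (e = i)) * ind (c = b)
        - (ind (c = i) * ind (b = i)) * ind (a = e) := by
    intro i
    have hpt : ∀ j : Fin d,
        ((ind (a = i) * ind (c = i) + ind (a = j) * ind (c = j))
            * (ind (b = i) * ind (e = i) + ind (b = j) * ind (e = j))
          - ind (a = i) * ind (c = j) * (ind (b = j) * ind (e = i))
          - ind (a = j) * ind (c = i) * (ind (b = i) * ind (e = j)))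
        = (ind (a = i) * ind (c = i) * (ind (b = i) * ind (e = i))
          + (ind (a = i) * ind (c = i)) * (ind (b = j) * ind (e = j))
          + (ind (a = j) * ind (c = j)) * (ind (b = i) * ind (e = i))
          + ind (a = j) * ind (c = j) * (ind (b = j) * ind (e = j)))
          - (ind (a = i) * ind (e = i)) * (ind (c = j) * ind (b = j))
          - (ind (a = j) * ind (e = j)) * (ind (c = i) * ind (b = i)) := by
      intro j; ring
    rw [Finset.sum_congr rfl fun j _ => hpt j]
    rw [Finset.sum_sub_distrib, Finset.sum_sub_distrib, Finset.sum_add_distrib,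
      Finset.sum_add_distrib, Finset.sum_add_distrib]
    rw [Finset.sum_const, Finset.card_univ, Fintype.card_fin, nsmul_eq_mul,
      ← Finset.mul_sum, ← Finset.sum_mul, ← Finset.mul_sum, ← Finset.sum_mul,
      sum_ind_two b e, sum_ind_two a c, sum_ind_four a c b e, sum_ind_two c b,
      sum_ind_two a e]
    ring
  rw [Finset.sum_congr rfl fun i _ => hj i]
  rw [Finset.sum_sub_distrib, Finset.sum_sub_distrib, Finset.sum_add_distrib,
    Finset.sum_add_distrib, Finset.sum_add_distrib]
  rw [← Finset.mul_sum, ← Finset.sum_mul, ← Finset.mul_sum, ← Finset.sum_mul,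
    ← Finset.sum_mul, Finset.sum_const, Finset.card_univ, Fintype.card_fin, nsmul_eq_mul,
    sum_ind_four a c b e, sum_ind_two a c, sum_ind_two b e, sum_ind_two a e,
    sum_ind_two c b]
  ring

lemma E2 {d : ℕ} (a b c e : Fin d) :
    ∑ i : Fin d,
      ((ind (a = i) * ind (c = i) + ind (a = i) * ind (c = i))
          * (ind (b = i) * ind (e = i) + ind (b = i) * ind (e = i))
        - ind (a = i) * ind (c = i) * (ind (b = i) * ind (e = i))
        - ind (a = i) * ind (c = i) * (ind (b = i) * ind (e = i)))
      = 2 * ind (a = c ∧ a = b ∧ a = e) := by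
  have hpt : ∀ i : Fin d,
      ((ind (a = i) * ind (c = i) + ind (a = i) * ind (c = i))
          * (ind (b = i) * ind (e = i) + ind (b = i) * ind (e = i))
        - ind (a = i) * ind (c = i) * (ind (b = i) * ind (e = i))
        - ind (a = i) * ind (c = i) * (ind (b = i) * ind (e = i)))
      = 2 * (ind (a = i) * ind (c = i) * (ind (b = i) * ind (e = i))) := by
    intro i; ring
  rw [Finset.sum_congr rfl fun i _ => hpt i, ← Finset.mul_sum, sum_ind_four a c b e]

/-- the antisymmetric-pairs sum -/
lemma sumL1 {d : ℕ} (a b c e : Fin d) :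
    ∑ t : Fin d × Fin d × Fin 4,
      (if t.1 = t.2.1 then (0:ℂ) else
        (uu t.1 t.2.1 (Complex.I ^ ((t.2.2 : ℕ))) a * conj (uu t.1 t.2.1 (Complex.I ^ ((t.2.2 : ℕ))) c))
          * (zz t.1 t.2.1 (Complex.I ^ ((t.2.2 : ℕ))) b * conj (zz t.1 t.2.1 (Complex.I ^ ((t.2.2 : ℕ))) e)))
      = 8 * (((d:ℂ) - 1) * ind (a = c ∧ b = e ∧ a = b) + ind (a = c ∧ b = e) - ind (a = e ∧ b = c)) := by
  have hinner : ∀ i j : Fin d,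
      (∑ ω : Fin 4, (if i = j then (0:ℂ) else
        (uu i j (Complex.I ^ ((ω : ℕ))) a * conj (uu i j (Complex.I ^ ((ω : ℕ))) c))
          * (zz i j (Complex.I ^ ((ω : ℕ))) b * conj (zz i j (Complex.I ^ ((ω : ℕ))) e))))
      = 4 * ((ind (a = i) * ind (c = i) + ind (a = j) * ind (c = j))
          * (ind (b = i) * ind (e = i) + ind (b = j) * ind (e = j))
        - ind (a = i) * ind (c = j) * (ind (b = j) * ind (e = i))
        - ind (a = j) * ind (c = i) * (ind (b = i) * ind (e = j)))
        - (if i = j then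
            4 * ((ind (a = i) * ind (c = i) + ind (a = j) * ind (c = j))
              * (ind (b = i) * ind (e = i) + ind (b = j) * ind (e = j))
            - ind (a = i) * ind (c = j) * (ind (b = j) * ind (e = i))
            - ind (a = j) * ind (c = i) * (ind (b = i) * ind (e = j))) else 0) := by
    intro i j
    have habs := innerB_abstract (ind (a = i)) (ind (a = j)) (ind (b = i)) (ind (b = j))
      (ind (c = i)) (ind (c = j)) (ind (e = i)) (ind (e = j))
    by_cases hij : i = j
    · simp only [hij, if_true, Finset.sum_const, smul_zero, sub_self]
    · simp only [hij, if_false, sub_zero]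
      rw [← habs]
      refine Finset.sum_congr rfl fun ω _ => ?_
      simp only [uu, zz, map_add, map_sub, map_mul, conj_ind]
  rw [Fintype.sum_prod_type]
  have houter : ∀ i : Fin d,
      (∑ y : Fin d × Fin 4, (if i = y.1 then (0:ℂ) else
        (uu i y.1 (Complex.I ^ ((y.2 : ℕ))) a * conj (uu i y.1 (Complex.I ^ ((y.2 : ℕ))) c))
          * (zz i y.1 (Complex.I ^ ((y.2 : ℕ))) b * conj (zz i y.1 (Complex.I ^ ((y.2 : ℕ))) e))))
      = ∑ j : Fin d, (4 * ((ind (a = i) * ind (c = i) + ind (a = j) * ind (c = j))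
          * (ind (b = i) * ind (e = i) + ind (b = j) * ind (e = j))
        - ind (a = i) * ind (c = j) * (ind (b = j) * ind (e = i))
        - ind (a = j) * ind (c = i) * (ind (b = i) * ind (e = j)))
        - (if i = j then
            4 * ((ind (a = i) * ind (c = i) + ind (a = j) * ind (c = j))
              * (ind (b = i) * ind (e = i) + ind (b = j) * ind (e = j))
            - ind (a = i) * ind (c = j) * (ind (b = j) * ind (e = i))
            - ind (a = j) * ind (c = i) * (ind (b = i) * ind (e = j))) else 0)) := by
    intro i
    rw [Fintype.sum_prod_type]
    exact Finset.sum_congr rfl fun j _ => hinner i j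
  rw [Finset.sum_congr rfl fun i _ => houter i]
  have hsplit : ∀ i : Fin d, ∑ j : Fin d, (4 * ((ind (a = i) * ind (c = i) + ind (a = j) * ind (c = j))
          * (ind (b = i) * ind (e = i) + ind (b = j) * ind (e = j))
        - ind (a = i) * ind (c = j) * (ind (b = j) * ind (e = i))
        - ind (a = j) * ind (c = i) * (ind (b = i) * ind (e = j)))
        - (if i = j then
            4 * ((ind (a = i) * ind (c = i) + ind (a = j) * ind (c = j))
              * (ind (b = i) * ind (e = i) + ind (b = j) * ind (e = j))
            - ind (a = i) * ind (c = j) * (ind (b = j) * ind (e = i))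
            - ind (a = j) * ind (c = i) * (ind (b = i) * ind (e = j))) else 0))
      = (∑ j : Fin d, 4 * ((ind (a = i) * ind (c = i) + ind (a = j) * ind (c = j))
          * (ind (b = i) * ind (e = i) + ind (b = j) * ind (e = j))
        - ind (a = i) * ind (c = j) * (ind (b = j) * ind (e = i))
        - ind (a = j) * ind (c = i) * (ind (b = i) * ind (e = j))))
        - 4 * ((ind (a = i) * ind (c = i) + ind (a = i) * ind (c = i))
              * (ind (b = i) * ind (e = i) + ind (b = i) * ind (e = i))
            - ind (a = i) * ind (c = i) * (ind (b = i) * ind (e = i))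
            - ind (a = i) * ind (c = i) * (ind (b = i) * ind (e = i))) := by
    intro i
    rw [Finset.sum_sub_distrib, Finset.sum_ite_eq]
    simp only [Finset.mem_univ, if_true]
  rw [Finset.sum_congr rfl fun i _ => hsplit i, Finset.sum_sub_distrib]
  have h1 : ∀ i : Fin d, (∑ j : Fin d, 4 * ((ind (a = i) * ind (c = i) + ind (a = j) * ind (c = j))
          * (ind (b = i) * ind (e = i) + ind (b = j) * ind (e = j))
        - ind (a = i) * ind (c = j) * (ind (b = j) * ind (e = i))
        - ind (a = j) * ind (c = i) * (ind (b = i) * ind (e = j))))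
      = 4 * ∑ j : Fin d, ((ind (a = i) * ind (c = i) + ind (a = j) * ind (c = j))
          * (ind (b = i) * ind (e = i) + ind (b = j) * ind (e = j))
        - ind (a = i) * ind (c = j) * (ind (b = j) * ind (e = i))
        - ind (a = j) * ind (c = i) * (ind (b = i) * ind (e = j))) := by
    intro i; rw [Finset.mul_sum]
  rw [Finset.sum_congr rfl fun i _ => h1 i, ← Finset.mul_sum, E1]
  have h2 : (∑ i : Fin d, 4 * ((ind (a = i) * ind (c = i) + ind (a = i) * ind (c = i))
              * (ind (b = i) * ind (e = i) + ind (b = i) * ind (e = i))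
            - ind (a = i) * ind (c = i) * (ind (b = i) * ind (e = i))
            - ind (a = i) * ind (c = i) * (ind (b = i) * ind (e = i))))
      = 4 * (2 * ind (a = c ∧ a = b ∧ a = e)) := by
    rw [← Finset.mul_sum, E2]
  rw [h2]
  rw [ind_mul_ind, ind_mul_ind]
  rw [ind_congr (show (a = c ∧ a = b ∧ a = e) ↔ (a = c ∧ b = e ∧ a = b) by
    constructor <;> rintro ⟨r1, r2, r3⟩
    · exact ⟨r1, r2.symm.trans r3, r2⟩
    · exact ⟨r1, r3, r3.trans r2⟩)]
  rw [ind_congr (show (a = e ∧ c = b) ↔ (a = e ∧ b = c) by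
    constructor <;> rintro ⟨r1, r2⟩ <;> exact ⟨r1, r2.symm⟩)]
  ring

lemma keyJ' (P1 P2 P3 P4 : Prop) [Decidable P1] [Decidable P2] [Decidable P3] [Decidable P4] :
    ∑ k : Fin 4, ((if P1 then Complex.I ^ (k : ℕ) else 1)
        * (if P2 then Complex.I ^ (k : ℕ) else 1)
        * ((if P3 then conj (Complex.I ^ (k : ℕ)) else 1)
        * (if P4 then conj (Complex.I ^ (k : ℕ)) else 1)))
      = if (((if P1 then 1 else 0) + (if P2 then 1 else 0) : ℕ)
            = (if P3 then 1 else 0) + (if P4 then 1 else 0)) then 4 else 0 := by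
  rw [sum_I_pow (fun w => (if P1 then w else 1) * (if P2 then w else 1)
      * ((if P3 then conj w else 1) * (if P4 then conj w else 1)))]
  by_cases h1 : P1 <;> by_cases h2 : P2 <;> by_cases h3 : P3 <;> by_cases h4 : P4 <;>
    simp only [h1, h2, h3, h4, if_true, if_false, map_one, Complex.conj_I, map_neg] <;>
    norm_num

lemma forall_cond_iff {d : ℕ} (a b c e : Fin d)
    (h : ∀ j : Fin d, ((if j = a then 1 else 0) + (if j = b then 1 else 0) : ℕ)
      = (if j = c then 1 else 0) + (if j = e then 1 else 0)) :
    (a = c ∧ b = e) ∨ (a = e ∧ b = c) := by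
  by_cases hac : a = c <;> by_cases hbe : b = e <;> by_cases hae : a = e <;> by_cases hbc : b = c
  all_goals first
  | exact Or.inl ⟨hac, hbe⟩
  | exact Or.inr ⟨hae, hbc⟩
  | (exfalso; have h1 := h a; rw [if_pos rfl, if_neg hac, if_neg hae] at h1;
     split_ifs at h1 <;> omega)
  | (exfalso; have h1 := h b; rw [if_neg hbc, if_neg hbe] at h1;
     split_ifs at h1 <;> omega)
  | (exfalso; have h1 := h e;
     rw [if_neg (fun hh => hae hh.symm), if_neg (fun hh => hbe hh.symm), if_pos rfl] at h1;
     split_ifs at h1 <;> omega)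
  | (exfalso; have h1 := h c;
     rw [if_neg (fun hh => hac hh.symm), if_neg (fun hh => hbc hh.symm), if_pos rfl] at h1;
     split_ifs at h1 <;> omega)

lemma cond_of_or {d : ℕ} (a b c e : Fin d) (H : (a = c ∧ b = e) ∨ (a = e ∧ b = c)) :
    ∀ j : Fin d, ((if j = a then 1 else 0) + (if j = b then 1 else 0) : ℕ)
      = (if j = c then 1 else 0) + (if j = e then 1 else 0) := by
  rcases H with ⟨rfl, rfl⟩ | ⟨rfl, rfl⟩ <;> intro j <;> omega

lemma ind_incl_excl {d : ℕ} (a b c e : Fin d) (H : (a = c ∧ b = e) ∨ (a = e ∧ b = c)) :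
    ind (a = c ∧ b = e) + ind (a = e ∧ b = c) - ind (a = c ∧ b = e ∧ a = b) = 1 := by
  rcases H with ⟨rfl, rfl⟩ | ⟨rfl, rfl⟩ <;> by_cases hab : a = b <;> simp [ind, hab]

lemma ind_incl_excl_zero {d : ℕ} (a b c e : Fin d) (H : ¬((a = c ∧ b = e) ∨ (a = e ∧ b = c))) :
    ind (a = c ∧ b = e) + ind (a = e ∧ b = c) - ind (a = c ∧ b = e ∧ a = b) = 0 := by
  have hP : ¬(a = c ∧ b = e) := fun h => H (Or.inl h)
  have hQ : ¬(a = e ∧ b = c) := fun h => H (Or.inr h)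
  have hR : ¬(a = c ∧ b = e ∧ a = b) := fun h => hP ⟨h.1, h.2.1⟩
  simp [ind, hP, hQ, hR]

/-- the phase-vector (2-design style) sum -/
lemma sumL2 {d : ℕ} (a b c e : Fin d) :
    ∑ v : Fin d → Fin 4,
      (Complex.I ^ ((v a : ℕ)) * conj (Complex.I ^ ((v c : ℕ))))
        * (Complex.I ^ ((v b : ℕ)) * conj (Complex.I ^ ((v e : ℕ))))
      = 4 ^ d * (ind (a = c ∧ b = e) + ind (a = e ∧ b = c) - ind (a = c ∧ b = e ∧ a = b)) := by
  have step1 : ∀ v : Fin d → Fin 4,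
      (Complex.I ^ ((v a : ℕ)) * conj (Complex.I ^ ((v c : ℕ))))
        * (Complex.I ^ ((v b : ℕ)) * conj (Complex.I ^ ((v e : ℕ))))
      = ∏ j : Fin d, ((if j = a then Complex.I ^ ((v j : ℕ)) else 1)
          * (if j = b then Complex.I ^ ((v j : ℕ)) else 1)
          * ((if j = c then conj (Complex.I ^ ((v j : ℕ))) else 1)
          * (if j = e then conj (Complex.I ^ ((v j : ℕ))) else 1))) := by
    intro v
    rw [Finset.prod_mul_distrib, Finset.prod_mul_distrib, Finset.prod_mul_distrib,
      Finset.prod_ite_eq' Finset.univ a (fun j => Complex.I ^ ((v j : ℕ))),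
      Finset.prod_ite_eq' Finset.univ b (fun j => Complex.I ^ ((v j : ℕ))),
      Finset.prod_ite_eq' Finset.univ c (fun j => conj (Complex.I ^ ((v j : ℕ)))),
      Finset.prod_ite_eq' Finset.univ e (fun j => conj (Complex.I ^ ((v j : ℕ))))]
    simp only [Finset.mem_univ, if_true]
    ring
  rw [Finset.sum_congr rfl (fun v _ => step1 v)]
  rw [show (Finset.univ : Finset (Fin d → Fin 4)) = Fintype.piFinset (fun _ => Finset.univ)
      from Fintype.piFinset_univ.symm]
  rw [← Finset.prod_univ_sum (fun _ : Fin d => (Finset.univ : Finset (Fin 4)))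
      (fun j k => ((if j = a then Complex.I ^ ((k : ℕ)) else 1)
        * (if j = b then Complex.I ^ ((k : ℕ)) else 1)
        * ((if j = c then conj (Complex.I ^ ((k : ℕ))) else 1)
        * (if j = e then conj (Complex.I ^ ((k : ℕ))) else 1))))]
  rw [Finset.prod_congr rfl (fun j _ => keyJ' (j = a) (j = b) (j = c) (j = e))]
  by_cases H : ∀ j : Fin d, ((if j = a then 1 else 0) + (if j = b then 1 else 0) : ℕ)
      = (if j = c then 1 else 0) + (if j = e then 1 else 0)
  · rw [Finset.prod_congr rfl (fun j _ => if_pos (H j)), Finset.prod_const,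
      Finset.card_univ, Fintype.card_fin, ind_incl_excl a b c e (forall_cond_iff a b c e H)]
    ring
  · push_neg at H
    obtain ⟨j, hj⟩ := H
    have hz : (if (((if j = a then 1 else 0) + if j = b then 1 else 0: ℕ))
        = (if j = c then 1 else 0) + if j = e then 1 else 0 then (4:ℂ) else 0) = 0 := if_neg hj
    rw [Finset.prod_eq_zero (Finset.mem_univ j) hz,
      ind_incl_excl_zero a b c e (fun hor => hj (cond_of_or a b c e hor j))]
    ring

/-- the off-diagonal classical sum -/
lemma sumL4 {d : ℕ} (a b c e : Fin d) :
    ∑ p : Fin d × Fin d, (if p.1 = p.2 then (0:ℂ) else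
        (ind (a = p.1) * ind (c = p.1)) * (ind (b = p.2) * ind (e = p.2)))
      = ind (a = c) * ind (b = e) - ind (a = c ∧ a = b ∧ a = e) := by
  have hpt : ∀ p : Fin d × Fin d, (if p.1 = p.2 then (0:ℂ) else
        (ind (a = p.1) * ind (c = p.1)) * (ind (b = p.2) * ind (e = p.2)))
      = (ind (a = p.1) * ind (c = p.1)) * (ind (b = p.2) * ind (e = p.2))
        - (if p.1 = p.2 then (ind (a = p.1) * ind (c = p.1)) * (ind (b = p.2) * ind (e = p.2))
            else 0) := by
    intro p; split_ifs <;> ring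
  rw [Finset.sum_congr rfl fun p _ => hpt p, Finset.sum_sub_distrib]
  congr 1
  · rw [Fintype.sum_prod_type]
    have : ∀ i : Fin d, ∑ j : Fin d,
        (ind (a = i) * ind (c = i)) * (ind (b = j) * ind (e = j))
        = (ind (a = i) * ind (c = i)) * ind (b = e) := by
      intro i; rw [← Finset.mul_sum, sum_ind_two b e]
    rw [Finset.sum_congr rfl fun i _ => this i, ← Finset.sum_mul, sum_ind_two a c]
  · rw [Fintype.sum_prod_type]
    have : ∀ i : Fin d, ∑ j : Fin d,
        (if i = j then (ind (a = i) * ind (c = i)) * (ind (b = j) * ind (e = j)) else 0)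
        = ind (a = i) * ind (c = i) * (ind (b = i) * ind (e = i)) := by
      intro i
      rw [Finset.sum_ite_eq]
      simp only [Finset.mem_univ, if_true]
    rw [Finset.sum_congr rfl fun i _ => this i, sum_ind_four a c b e]

lemma psd_diag_nonneg {d : ℕ} {M : Matrix (Fin d) (Fin d) ℂ} (hM : M.PosSemidef) (i : Fin d) :
    0 ≤ M i i := by
  have h := hM.dotProduct_mulVec_nonneg (Pi.single i 1)
  simpa [dotProduct, Matrix.mulVec, Pi.single_apply, Finset.sum_ite_eq] using h

open scoped Matrix MatrixOrder in
lemma psd_eq_conjTranspose_mul_self {d : ℕ} {A : Matrix (Fin d) (Fin d) ℂ}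
    (hA : A.PosSemidef) : ∃ X : Matrix (Fin d) (Fin d) ℂ, A = Xᴴ * X := by
  obtain ⟨X, hX⟩ := CStarAlgebra.nonneg_iff_eq_star_mul_self.mp hA.nonneg
  exact ⟨X, hX⟩

open Matrix in
/-- `∑ i j, A i j * B j i ≥ 0` for PSD `A`, `B` -/
lemma trace_pair_nonneg {d : ℕ} {A B : Matrix (Fin d) (Fin d) ℂ}
    (hA : A.PosSemidef) (hB : B.PosSemidef) :
    0 ≤ ∑ i : Fin d, ∑ j : Fin d, A i j * B j i := by
  obtain ⟨X, rfl⟩ := psd_eq_conjTranspose_mul_self hA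
  obtain ⟨Y, rfl⟩ := psd_eq_conjTranspose_mul_self hB
  have key : ∑ i : Fin d, ∑ j : Fin d, (Xᴴ * X) i j * ((Yᴴ * Y) j i)
      = Matrix.trace ((X * Yᴴ)ᴴ * (X * Yᴴ)) := by
    have htr : Matrix.trace ((X * Yᴴ)ᴴ * (X * Yᴴ)) = Matrix.trace ((Yᴴ * Y) * (Xᴴ * X)) := by
      rw [Matrix.conjTranspose_mul, Matrix.conjTranspose_conjTranspose, Matrix.trace_mul_comm]
      rw [show (X * Yᴴ) * (Y * Xᴴ) = X * ((Yᴴ * Y) * Xᴴ) by simp [Matrix.mul_assoc],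
        Matrix.trace_mul_comm]
      simp [Matrix.mul_assoc]
    rw [htr, Matrix.trace, Finset.sum_comm]
    refine Finset.sum_congr rfl fun j _ => ?_
    rw [Matrix.diag_apply, Matrix.mul_apply]
    refine Finset.sum_congr rfl fun i _ => ?_
    ring
  rw [key, Matrix.trace]
  exact Finset.sum_nonneg fun i _ =>
    psd_diag_nonneg (Matrix.posSemidef_conjTranspose_mul_self _) i

/-! ### the separating family -/

abbrev TT (d : ℕ) : Type :=
  (Fin d × Fin d × Fin 4) ⊕ ((Fin d → Fin 4) ⊕ (Fin d ⊕ (Fin d × Fin d)))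

def FA (d : ℕ) (aR bR cR : ℝ) : TT d → Matrix (Fin d) (Fin d) ℂ
  | Sum.inl (i, j, ω) => if i = j then 0 else outer (aR/8) (uu i j (Complex.I ^ ((ω : ℕ))))
  | Sum.inr (Sum.inl v) => outer (bR/4^d) (fun x => Complex.I ^ ((v x : ℕ)))
  | Sum.inr (Sum.inr (Sum.inl i)) => outer bR (fun x => ind (x = i))
  | Sum.inr (Sum.inr (Sum.inr (i, j))) => if i = j then 0 else outer cR (fun x => ind (x = i))

def FB (d : ℕ) : TT d → Matrix (Fin d) (Fin d) ℂ
  | Sum.inl (i, j, ω) => if i = j then 0 else outer 1 (zz i j (Complex.I ^ ((ω : ℕ))))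
  | Sum.inr (Sum.inl v) => outer 1 (fun x => Complex.I ^ ((v x : ℕ)))
  | Sum.inr (Sum.inr (Sum.inl i)) => outer 1 (fun x => ind (x = i))
  | Sum.inr (Sum.inr (Sum.inr (i, j))) => if i = j then 0 else outer 1 (fun x => ind (x = j))

lemma FA_posSemidef (d : ℕ) (aR bR cR : ℝ) (ha : 0 ≤ aR) (hb : 0 ≤ bR) (hc : 0 ≤ cR)
    (t : TT d) : (FA d aR bR cR t).PosSemidef := by
  rcases t with ⟨i, j, ω⟩ | v | i | ⟨i, j⟩
  · by_cases hij : i = j <;> simp only [FA, hij, if_true, if_false]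
    · exact Matrix.PosSemidef.zero
    · exact outer_posSemidef (by positivity) _
  · exact outer_posSemidef (by positivity) _
  · exact outer_posSemidef hb _
  · by_cases hij : i = j <;> simp only [FA, hij, if_true, if_false]
    · exact Matrix.PosSemidef.zero
    · exact outer_posSemidef hc _

lemma FB_posSemidef (d : ℕ) (t : TT d) : (FB d t).PosSemidef := by
  rcases t with ⟨i, j, ω⟩ | v | i | ⟨i, j⟩
  · by_cases hij : i = j <;> simp only [FB, hij, if_true, if_false]
    · exact Matrix.PosSemidef.zero
    · exact outer_posSemidef (by norm_num) _
  · exact outer_posSemidef (by norm_num) _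
  · exact outer_posSemidef (by norm_num) _
  · by_cases hij : i = j <;> simp only [FB, hij, if_true, if_false]
    · exact Matrix.PosSemidef.zero
    · exact outer_posSemidef (by norm_num) _

/-- the main separability identity -/
lemma main_sum (d : ℕ) (γ δ aR bR cR : ℝ)
    (hf1 : aR * ((d:ℝ) - 1) = cR)
    (hf2 : γ * (1/2) + δ * (1/2) = aR + bR + cR)
    (hf3 : γ * (1/2) - δ * (1/2) = bR - aR) :
    (γ : ℂ) • Pplus d + (δ : ℂ) • Pminus d
      = ∑ t : TT d, Matrix.kroneckerMap (· * ·) (FA d aR bR cR t) (FB d t) := by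
  ext ⟨a, b⟩ ⟨c, e⟩
  have h4 : ((4:ℂ)^d) ≠ 0 := pow_ne_zero _ (by norm_num)
  -- left side entry
  have lhs_entry : ((γ : ℂ) • Pplus d + (δ : ℂ) • Pminus d) (a, b) (c, e)
      = (γ:ℂ) * (1/2) * (ind (a = c ∧ b = e) + ind (a = e ∧ b = c))
        + (δ:ℂ) * (1/2) * (ind (a = c ∧ b = e) - ind (a = e ∧ b = c)) := by
    simp only [Matrix.add_apply, Matrix.smul_apply, Pplus, Pminus, Matrix.smul_apply,
      Matrix.add_apply, Matrix.sub_apply, Matrix.one_apply, swapOp, Prod.mk.injEq,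
      smul_eq_mul, ind]
    ring
  rw [lhs_entry, Matrix.sum_apply]
  rw [show (Finset.univ : Finset (TT d)) = Finset.univ from rfl]
  rw [Fintype.sum_sum_type, Fintype.sum_sum_type, Fintype.sum_sum_type]
  -- group 1
  have g1 : ∑ t : Fin d × Fin d × Fin 4,
      Matrix.kroneckerMap (· * ·) (FA d aR bR cR (Sum.inl t)) (FB d (Sum.inl t)) (a, b) (c, e)
      = (aR:ℂ) * (((d:ℂ) - 1) * ind (a = c ∧ b = e ∧ a = b) + ind (a = c ∧ b = e)
          - ind (a = e ∧ b = c)) := by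
    have hpt : ∀ t : Fin d × Fin d × Fin 4,
        Matrix.kroneckerMap (· * ·) (FA d aR bR cR (Sum.inl t)) (FB d (Sum.inl t)) (a, b) (c, e)
        = ((aR:ℂ)/8) * (if t.1 = t.2.1 then (0:ℂ) else
          (uu t.1 t.2.1 (Complex.I ^ ((t.2.2 : ℕ))) a * conj (uu t.1 t.2.1 (Complex.I ^ ((t.2.2 : ℕ))) c))
            * (zz t.1 t.2.1 (Complex.I ^ ((t.2.2 : ℕ))) b * conj (zz t.1 t.2.1 (Complex.I ^ ((t.2.2 : ℕ))) e))) := by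
      rintro ⟨i, j, ω⟩
      by_cases hij : i = j
      · simp [FA, FB, hij]
      · simp only [FA, FB, if_neg hij, Matrix.kroneckerMap_apply, outer_apply,
          Complex.ofReal_one, Complex.ofReal_div, Complex.ofReal_ofNat]
        ring
    rw [Finset.sum_congr rfl fun t _ => hpt t, ← Finset.mul_sum, sumL1]
    ring
  -- group 2
  have g2 : ∑ v : Fin d → Fin 4,
      Matrix.kroneckerMap (· * ·) (FA d aR bR cR (Sum.inr (Sum.inl v)))
        (FB d (Sum.inr (Sum.inl v))) (a, b) (c, e)
      = (bR:ℂ) * (ind (a = c ∧ b = e) + ind (a = e ∧ b = c) - ind (a = c ∧ b = e ∧ a = b)) := by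
    have hpt : ∀ v : Fin d → Fin 4,
        Matrix.kroneckerMap (· * ·) (FA d aR bR cR (Sum.inr (Sum.inl v)))
          (FB d (Sum.inr (Sum.inl v))) (a, b) (c, e)
        = ((bR:ℂ)/4^d) * ((Complex.I ^ ((v a : ℕ)) * conj (Complex.I ^ ((v c : ℕ))))
            * (Complex.I ^ ((v b : ℕ)) * conj (Complex.I ^ ((v e : ℕ))))) := by
      intro v
      simp only [FA, FB, Matrix.kroneckerMap_apply, outer_apply, Complex.ofReal_one,
        Complex.ofReal_div, Complex.ofReal_pow, Complex.ofReal_ofNat]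
      ring
    rw [Finset.sum_congr rfl fun v _ => hpt v, ← Finset.mul_sum, sumL2]
    field_simp
  -- group 3
  have g3 : ∑ i : Fin d,
      Matrix.kroneckerMap (· * ·) (FA d aR bR cR (Sum.inr (Sum.inr (Sum.inl i))))
        (FB d (Sum.inr (Sum.inr (Sum.inl i)))) (a, b) (c, e)
      = (bR:ℂ) * ind (a = c ∧ a = b ∧ a = e) := by
    have hpt : ∀ i : Fin d,
        Matrix.kroneckerMap (· * ·) (FA d aR bR cR (Sum.inr (Sum.inr (Sum.inl i))))
          (FB d (Sum.inr (Sum.inr (Sum.inl i)))) (a, b) (c, e)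
        = (bR:ℂ) * (ind (a = i) * ind (c = i) * (ind (b = i) * ind (e = i))) := by
      intro i
      simp only [FA, FB, Matrix.kroneckerMap_apply, outer_apply, Complex.ofReal_one, conj_ind]
      ring
    rw [Finset.sum_congr rfl fun i _ => hpt i, ← Finset.mul_sum, sum_ind_four a c b e]
  -- group 4
  have g4 : ∑ p : Fin d × Fin d,
      Matrix.kroneckerMap (· * ·) (FA d aR bR cR (Sum.inr (Sum.inr (Sum.inr p))))
        (FB d (Sum.inr (Sum.inr (Sum.inr p)))) (a, b) (c, e)
      = (cR:ℂ) * (ind (a = c) * ind (b = e) - ind (a = c ∧ a = b ∧ a = e)) := by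
    have hpt : ∀ p : Fin d × Fin d,
        Matrix.kroneckerMap (· * ·) (FA d aR bR cR (Sum.inr (Sum.inr (Sum.inr p))))
          (FB d (Sum.inr (Sum.inr (Sum.inr p)))) (a, b) (c, e)
        = (cR:ℂ) * (if p.1 = p.2 then (0:ℂ) else
            (ind (a = p.1) * ind (c = p.1)) * (ind (b = p.2) * ind (e = p.2))) := by
      rintro ⟨i, j⟩
      by_cases hij : i = j
      · simp [FA, FB, hij]
      · simp only [FA, FB, if_neg hij, Matrix.kroneckerMap_apply, outer_apply,
          Complex.ofReal_one, conj_ind]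
        ring
    rw [Finset.sum_congr rfl fun p _ => hpt p, ← Finset.mul_sum, sumL4]
  rw [g1, g2, g3, g4]
  -- final scalar identity
  have hf1' : (aR:ℂ) * ((d:ℂ) - 1) = (cR:ℂ) := by
    have h := congrArg (Complex.ofReal) hf1; push_cast at h; linear_combination h
  have hf2' : (γ:ℂ) * (1/2) + (δ:ℂ) * (1/2) = (aR:ℂ) + (bR:ℂ) + (cR:ℂ) := by
    have h := congrArg (Complex.ofReal) hf2; push_cast at h; linear_combination h
  have hf3' : (γ:ℂ) * (1/2) - (δ:ℂ) * (1/2) = (bR:ℂ) - (aR:ℂ) := by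
    have h := congrArg (Complex.ofReal) hf3; push_cast at h; linear_combination h
  -- bridge the two all-equal indicator shapes
  have hbridge : ind (a = c ∧ a = b ∧ a = e) = ind (a = c ∧ b = e ∧ a = b) :=
    ind_congr (by
      constructor <;> rintro ⟨r1, r2, r3⟩
      · exact ⟨r1, r2.symm.trans r3, r2⟩
      · exact ⟨r1, r3, r3.trans r2⟩)
  rw [hbridge, ind_mul_ind]
  linear_combination (ind (a = c ∧ b = e)) * hf2' + (ind (a = e ∧ b = c)) * hf3'
    - (ind (a = c ∧ b = e ∧ a = b)) * hf1'

/-- for `γ, δ ≥ 0` with `(d+1)γ + (d-1)δ = 2`, the operator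
`C = γ P₊ + δ P₋` on `ℂ^d ⊗ ℂ^d` is separable (a finite sum of Kronecker
products of positive semidefinite matrices) iff `γ ≥ 1/(d+1)`. -/
theorem stmt14 (d : ℕ) (hd : 2 ≤ d) (γ δ : ℝ) (hγ : 0 ≤ γ) (hδ : 0 ≤ δ)
    (hnorm : ((d : ℝ) + 1) * γ + ((d : ℝ) - 1) * δ = 2) :
    (∃ (s : ℕ) (A B : Fin s → Matrix (Fin d) (Fin d) ℂ),
      (∀ i, (A i).PosSemidef) ∧ (∀ i, (B i).PosSemidef) ∧
      (γ : ℂ) • Pplus d + (δ : ℂ) • Pminus d =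
        ∑ i, Matrix.kroneckerMap (· * ·) (A i) (B i)) ↔
    1 / ((d : ℝ) + 1) ≤ γ := by
  have hd2 : (2:ℝ) ≤ (d:ℝ) := by exact_mod_cast hd
  have hdpos : (0:ℝ) < (d:ℝ) + 1 := by linarith
  constructor
  · rintro ⟨s, A, B, hA, hB, heq⟩
    -- apply the swap functional to both sides
    have hfun := congrArg (fun M : Matrix (Fin d × Fin d) (Fin d × Fin d) ℂ =>
      ∑ p : Fin d × Fin d, M p (p.2, p.1)) heq
    -- evaluate LHS
    have hswap : ∀ p : Fin d × Fin d, swapOp d p (p.2, p.1) = 1 := by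
      intro p; simp [swapOp]
    have hone : ∑ p : Fin d × Fin d,
        (1 : Matrix (Fin d × Fin d) (Fin d × Fin d) ℂ) p (p.2, p.1) = (d:ℂ) := by
      rw [Fintype.sum_prod_type]
      have : ∀ i : Fin d, ∑ j : Fin d,
          (1 : Matrix (Fin d × Fin d) (Fin d × Fin d) ℂ) (i, j) (j, i) = ind (i = i) := by
        intro i
        have hp : ∀ j : Fin d, (1 : Matrix (Fin d × Fin d) (Fin d × Fin d) ℂ) (i, j) (j, i)
            = if i = j then (if i = j then (1:ℂ) else 0) else 0 := by
          intro j
          simp only [Matrix.one_apply, Prod.mk.injEq]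
          by_cases h : i = j <;> simp [h]
        rw [Finset.sum_congr rfl fun j _ => hp j, Finset.sum_ite_eq]
        simp [ind]
      rw [Finset.sum_congr rfl fun i _ => this i]
      simp [ind]
    have hlhs : ∑ p : Fin d × Fin d,
        ((γ : ℂ) • Pplus d + (δ : ℂ) • Pminus d) p (p.2, p.1)
        = ((γ * ((d:ℝ) + (d:ℝ)^2) + δ * ((d:ℝ) - (d:ℝ)^2)) / 2 : ℝ) := by
      simp only [Matrix.add_apply, Matrix.smul_apply, Pplus, Pminus, Matrix.smul_apply,
        Matrix.add_apply, Matrix.sub_apply, smul_eq_mul]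
      rw [Finset.sum_congr rfl (fun p _ => by rw [hswap p])]
      have expand : ∀ p : Fin d × Fin d,
          (γ:ℂ) * (1/2 * ((1 : Matrix (Fin d × Fin d) (Fin d × Fin d) ℂ) p (p.2, p.1) + 1))
            + (δ:ℂ) * (1/2 * ((1 : Matrix (Fin d × Fin d) (Fin d × Fin d) ℂ) p (p.2, p.1) - 1))
          = ((γ:ℂ) * (1/2) + (δ:ℂ) * (1/2))
              * (1 : Matrix (Fin d × Fin d) (Fin d × Fin d) ℂ) p (p.2, p.1)
            + ((γ:ℂ) * (1/2) - (δ:ℂ) * (1/2)) := by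
        intro p; ring
      rw [Finset.sum_congr rfl fun p _ => expand p, Finset.sum_add_distrib,
        ← Finset.mul_sum, hone, Finset.sum_const, Finset.card_univ]
      simp only [Fintype.card_prod, Fintype.card_fin, nsmul_eq_mul]
      push_cast
      ring
    -- RHS is nonneg
    have hrhs : (0:ℂ) ≤ ∑ p : Fin d × Fin d,
        (∑ i, Matrix.kroneckerMap (· * ·) (A i) (B i)) p (p.2, p.1) := by
      have hsw : ∑ p : Fin d × Fin d,
          (∑ i, Matrix.kroneckerMap (· * ·) (A i) (B i)) p (p.2, p.1)
          = ∑ t, ∑ i : Fin d, ∑ j : Fin d, (A t) i j * (B t) j i := by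
        rw [Finset.sum_congr rfl fun p _ => Matrix.sum_apply p (p.2, p.1) _ _,
          Finset.sum_comm]
        refine Finset.sum_congr rfl fun t _ => ?_
        rw [Fintype.sum_prod_type]
        rfl
      rw [hsw]
      exact Finset.sum_nonneg fun t _ => trace_pair_nonneg (hA t) (hB t)
    have hreal : (0:ℝ) ≤ (γ * ((d:ℝ) + (d:ℝ)^2) + δ * ((d:ℝ) - (d:ℝ)^2)) / 2 := by
      have h := hrhs
      rw [← hfun, hlhs] at h
      exact_mod_cast Complex.zero_le_real.1 h
    rw [div_le_iff₀ hdpos]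
    nlinarith [hreal, hnorm, hδ, hd2]
  · intro hγge
    set aR : ℝ := δ / ((d:ℝ) + 1) with haR_def
    set bR : ℝ := (((d:ℝ) + 1) * γ - 1) / ((d:ℝ) + 1) with hbR_def
    set cR : ℝ := ((d:ℝ) - 1) * δ / ((d:ℝ) + 1) with hcR_def
    have ha : 0 ≤ aR := by positivity
    have hb : 0 ≤ bR := by
      apply div_nonneg _ hdpos.le
      rw [div_le_iff₀ hdpos] at hγge
      linarith
    have hc : 0 ≤ cR := by
      apply div_nonneg _ hdpos.le
      have : (1:ℝ) ≤ (d:ℝ) := by linarith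
      nlinarith
    have hf1 : aR * ((d:ℝ) - 1) = cR := by
      rw [haR_def, hcR_def]; field_simp
    have hf2 : γ * (1/2) + δ * (1/2) = aR + bR + cR := by
      rw [haR_def, hbR_def, hcR_def]; field_simp; linarith [hnorm]
    have hf3 : γ * (1/2) - δ * (1/2) = bR - aR := by
      rw [haR_def, hbR_def]; field_simp; linarith [hnorm]
    refine ⟨Fintype.card (TT d),
      fun i => FA d aR bR cR ((Fintype.equivFin (TT d)).symm i),
      fun i => FB d ((Fintype.equivFin (TT d)).symm i),
      fun i => FA_posSemidef d aR bR cR ha hb hc _,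
      fun i => FB_posSemidef d _, ?_⟩
    rw [Equiv.sum_comp ((Fintype.equivFin (TT d)).symm)
      (fun t => Matrix.kroneckerMap (· * ·) (FA d aR bR cR t) (FB d t))]
    exact main_sum d γ δ aR bR cR hf1 hf2 hf3

end
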